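/- Assume the reverse Loewner flow setup. Then Y is strictly increasing on [0,t], the map s ↦ Y(s)² − y² is a continuous strictly increasing bijection from [0,t] onto [0, Y(t)² − y²], and its inverse function θ : [0, Y(t)² − y²] → [0,t] satisfies θ(u) = (1/4)·∫₀ᵘ ( X(θ(v))²/(y² + v) + 1 ) dv for all u ∈ [0, Y(t)² − y²]. -/

import Mathlib

open Set MeasureTheory intervalIntegral Real

/-- Time change for the reverse Loewner flow: `Y` is strictly increasing, `s ↦ Y(s)² − y²` is a
continuous strictly increasing bijection from `[0,t]` onto `[0, Y(t)² − y²]`, and its inverse `θ`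
satisfies `θ(u) = (1/4)∫₀ᵘ (X(θ(v))²/(y² + v) + 1) dv`. -/
theorem reverse_flow_time_change
    (σ t : ℝ) (hσ0 : 0 < σ) (ht : 0 < t)
    (β : ℝ → ℝ) (hβcont : ContinuousOn β (Icc 0 t)) (hβ0 : β 0 = 0)
    (hβlip : ∀ r ∈ Icc (0 : ℝ) t, ∀ s ∈ Icc (0 : ℝ) t, |β s - β r| ≤ σ * Real.sqrt |s - r|)
    (y : ℝ) (hy : 0 < y)
    (X Y : ℝ → ℝ)
    (hXcont : ContinuousOn X (Icc 0 t)) (hYcont : ContinuousOn Y (Icc 0 t))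
    (hYpos : ∀ s ∈ Icc (0 : ℝ) t, 0 < Y s)
    (hX : ∀ s ∈ Icc (0 : ℝ) t,
      X s = β s - ∫ r in (0 : ℝ)..s, 2 * X r / (X r ^ 2 + Y r ^ 2))
    (hY : ∀ s ∈ Icc (0 : ℝ) t,
      Y s = y + ∫ r in (0 : ℝ)..s, 2 * Y r / (X r ^ 2 + Y r ^ 2))
    : StrictMonoOn Y (Icc (0 : ℝ) t) ∧
      ContinuousOn (fun s => Y s ^ 2 - y ^ 2) (Icc (0 : ℝ) t) ∧
      StrictMonoOn (fun s => Y s ^ 2 - y ^ 2) (Icc (0 : ℝ) t) ∧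
      BijOn (fun s => Y s ^ 2 - y ^ 2) (Icc (0 : ℝ) t) (Icc (0 : ℝ) (Y t ^ 2 - y ^ 2)) ∧
      ∀ θ : ℝ → ℝ, (∀ s ∈ Icc (0 : ℝ) t, θ (Y s ^ 2 - y ^ 2) = s) →
        ∀ u ∈ Icc (0 : ℝ) (Y t ^ 2 - y ^ 2),
          θ u = 1 / 4 * ∫ v in (0 : ℝ)..u, (X (θ v) ^ 2 / (y ^ 2 + v) + 1) := by
  -- setup
  set g : ℝ → ℝ := fun s => Y s ^ 2 - y ^ 2 with hgdef
  have hdenom : ∀ r ∈ Icc (0 : ℝ) t, 0 < X r ^ 2 + Y r ^ 2 := fun r hr => by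
    have := hYpos r hr; positivity
  set fY : ℝ → ℝ := fun r => 2 * Y r / (X r ^ 2 + Y r ^ 2) with hfYdef
  have hfYcont : ContinuousOn fY (Icc 0 t) := by
    apply ContinuousOn.div (by fun_prop) (by fun_prop)
    exact fun r hr => (hdenom r hr).ne'
  have hfYpos : ∀ r ∈ Icc (0 : ℝ) t, 0 < fY r := fun r hr => by
    have h1 := hYpos r hr; have h2 := hdenom r hr
    exact div_pos (by linarith) h2
  have hY0 : Y 0 = y := by
    have := hY 0 (by constructor <;> simp [ht.le])
    simpa using this
  -- derivative of Y at interior points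
  have hYderiv : ∀ x ∈ Ioo (0 : ℝ) t, HasDerivAt Y (fY x) x := by
    intro x hx
    have hmem : Icc (0 : ℝ) t ∈ nhds x := Icc_mem_nhds hx.1 hx.2
    have hInt : IntervalIntegrable fY MeasureTheory.volume 0 x := by
      apply ContinuousOn.intervalIntegrable
      apply hfYcont.mono
      rw [uIcc_of_le hx.1.le]
      exact Icc_subset_Icc le_rfl hx.2.le
    have hca : ContinuousAt fY x := (hfYcont.continuousAt hmem)
    have hmeas : StronglyMeasurableAtFilter fY (nhds x) MeasureTheory.volume :=
      ContinuousAt.stronglyMeasurableAtFilter isOpen_Ioo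
        (fun z hz => hfYcont.continuousAt (Icc_mem_nhds hz.1 hz.2)) x hx
    have hI : HasDerivAt (fun s => ∫ r in (0:ℝ)..s, fY r) (fY x) x :=
      intervalIntegral.integral_hasDerivAt_right hInt hmeas hca
    have hI' : HasDerivAt (fun s => y + ∫ r in (0:ℝ)..s, fY r) (fY x) x := by
      exact hI.const_add y
    apply hI'.congr_of_eventuallyEq
    exact Filter.eventuallyEq_of_mem hmem (fun s hs => hY s hs)
  -- strict monotonicity of Y
  have hYmono : StrictMonoOn Y (Icc (0 : ℝ) t) := by
    apply strictMonoOn_of_deriv_pos (convex_Icc 0 t) hYcont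
    intro x hx
    rw [interior_Icc] at hx
    rw [(hYderiv x hx).deriv]
    exact hfYpos x (Ioo_subset_Icc_self hx)
  have hgcont : ContinuousOn g (Icc (0 : ℝ) t) := by
    apply ContinuousOn.sub _ continuousOn_const
    exact hYcont.pow 2
  have hgmono : StrictMonoOn g (Icc (0 : ℝ) t) := by
    intro a ha b hb hab
    have h1 := hYmono ha hb hab
    have h2 := hYpos a ha
    simp only [hgdef, sub_lt_sub_iff_right]
    nlinarith
  have hg0 : g 0 = 0 := by simp [hgdef, hY0]
  have h0mem : (0:ℝ) ∈ Icc (0:ℝ) t := ⟨le_rfl, ht.le⟩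
  have htmem : t ∈ Icc (0:ℝ) t := ⟨ht.le, le_rfl⟩
  have hbij : BijOn g (Icc (0 : ℝ) t) (Icc (0 : ℝ) (Y t ^ 2 - y ^ 2)) := by
    have hgt : g t = Y t ^ 2 - y ^ 2 := rfl
    refine ⟨?_, hgmono.injOn, ?_⟩
    · intro s hs
      constructor
      · rw [← hg0]; exact hgmono.monotoneOn h0mem hs hs.1
      · rw [← hgt]; exact hgmono.monotoneOn hs htmem hs.2
    · intro u hu
      have := intermediate_value_Icc ht.le hgcont
      rw [hg0, hgt] at this
      exact this hu
  refine ⟨hYmono, hgcont, hgmono, hbij, ?_⟩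
  -- final part
  intro θ hθ u hu
  -- continuity of θ on the target interval
  have hθcont : ContinuousOn θ (Icc (0 : ℝ) (Y t ^ 2 - y ^ 2)) := by
    rw [continuousOn_iff_continuous_restrict]
    have hec : Continuous (hbij.equiv g) := by
      have : Continuous ((Icc (0:ℝ) t).restrict g) :=
        continuousOn_iff_continuous_restrict.1 hgcont
      exact Continuous.subtype_mk (this.congr (fun x => rfl)) _
    let homeo := hec.homeoOfEquivCompactToT2 (f := hbij.equiv g)
    have : (Icc (0 : ℝ) (Y t ^ 2 - y ^ 2)).restrict θ
        = fun u => ((homeo.symm u : (Icc (0:ℝ) t)) : ℝ) := by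
      funext v
      have h1 : homeo (homeo.symm v) = v := homeo.apply_symm_apply v
      have h2 : g ((homeo.symm v : (Icc (0:ℝ) t)) : ℝ) = (v : ℝ) :=
        congrArg Subtype.val h1
      have h3 := hθ ((homeo.symm v : (Icc (0:ℝ) t)) : ℝ) (homeo.symm v).2
      show θ v = _
      rw [← h2, h3]
    rw [show (Icc (0 : ℝ) (Y t ^ 2 - y ^ 2)).domRestrict θ = (Icc (0 : ℝ) (Y t ^ 2 - y ^ 2)).restrict θ from rfl, this]
    exact continuous_subtype_val.comp homeo.symm.continuous
  obtain ⟨s, hs, hgs⟩ := hbij.surjOn hu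
  have hθu : θ u = s := by rw [← hgs]; exact hθ s hs
  set g' : ℝ → ℝ := fun x => 4 * Y x ^ 2 / (X x ^ 2 + Y x ^ 2) with hg'def
  have hgderiv : ∀ x ∈ Ioo (0:ℝ) t, HasDerivAt g (g' x) x := by
    intro x hx
    have h1 : HasDerivAt (fun s => Y s ^ 2 - y ^ 2)
        (2 * Y x ^ 1 * fY x - 0) x := ((hYderiv x hx).pow 2).sub (hasDerivAt_const x _)
    convert h1 using 1
    have := (hdenom x (Ioo_subset_Icc_self hx)).ne'
    field_simp [hg'def, hfYdef]
    ring
  have hg'cont : ContinuousOn g' (Icc 0 t) := by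
    apply ContinuousOn.div (by fun_prop) (by fun_prop)
    exact fun r hr => (hdenom r hr).ne'
  set h : ℝ → ℝ := fun v => X (θ v) ^ 2 / (y ^ 2 + v) + 1 with hhdef
  have hsub : Icc (0:ℝ) s ⊆ Icc (0:ℝ) t := Icc_subset_Icc le_rfl hs.2
  have himg : g '' Icc (0:ℝ) s = Icc (g 0) (g s) := by
    apply eq_of_subset_of_subset
    · rintro v ⟨r, hr, rfl⟩
      exact ⟨hgmono.monotoneOn h0mem (hsub hr) hr.1,
        hgmono.monotoneOn (hsub hr) hs hr.2⟩
    · exact intermediate_value_Icc hs.1 (hgcont.mono hsub)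
  -- change of variables
  have hcov : (∫ x in (0:ℝ)..s, g' x • (h ∘ g) x) = ∫ v in (g 0)..(g s), h v := by
    apply intervalIntegral.integral_comp_smul_deriv''
    · rw [uIcc_of_le hs.1]; exact hgcont.mono hsub
    · rw [min_eq_left hs.1, max_eq_right hs.1]
      intro x hx
      exact ((hgderiv x (Ioo_subset_Ioo le_rfl hs.2 hx)).hasDerivWithinAt)
    · rw [uIcc_of_le hs.1]; exact hg'cont.mono hsub
    · rw [uIcc_of_le hs.1, himg, hg0, hgs]
      have hIccsub : Icc (0:ℝ) u ⊆ Icc (0:ℝ) (Y t ^ 2 - y ^ 2) :=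
        Icc_subset_Icc le_rfl hu.2
      apply ContinuousOn.add _ continuousOn_const
      apply ContinuousOn.div
      · apply ContinuousOn.pow
        apply hXcont.comp (hθcont.mono hIccsub)
        intro v hv
        obtain ⟨r, hr, hgr⟩ := hbij.surjOn (hIccsub hv)
        rw [← hgr, hθ r hr]; exact hr
      · fun_prop
      · intro v hv
        have := hy
        nlinarith [hv.1]
  -- the substituted integrand is 4
  have hfour : (∫ x in (0:ℝ)..s, g' x • (h ∘ g) x) = 4 * s := by
    have : ∀ x ∈ uIcc (0:ℝ) s, g' x • (h ∘ g) x = 4 := by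
      intro x hx
      rw [uIcc_of_le hs.1] at hx
      have hxt := hsub hx
      have hYx := hYpos x hxt
      have hdx := hdenom x hxt
      have hθgx : θ (g x) = x := hθ x hxt
      simp only [Function.comp, hhdef, hg'def, smul_eq_mul, hθgx, hgdef]
      have hy2 : y ^ 2 + (Y x ^ 2 - y ^ 2) = Y x ^ 2 := by ring
      rw [hy2]
      field_simp
      rw [show θ (Y x ^ 2 - y ^ 2) = x from hθgx]
    rw [intervalIntegral.integral_congr this]
    simp [mul_comm]
  rw [hg0, hgs] at hcov
  rw [hθu, ← hcov, hfour]
  ring
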